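/- The derivative at 1 of the sum-generating polynomial of a-parking functions, D(n,a) := P'(n,a)(1), satisfies D(n,a) - Σ_{k=0}^{n} C(n,k) · D(n-k, a+k-1) = n · a(a+n)^{n-1}, with D(0,a)=0 and D(n,0)=0. -/

import Mathlib

/-- The weakly increasing sorted version of a vector of naturals. -/
def sortPF {n : ℕ} (p : Fin n → ℕ) : List ℕ :=
  Multiset.sort (↑(List.ofFn p)) (· ≤ ·)

/-- `p` is an `a`-parking function of length `n`: all entries are positive and the
`i`-th entry (0-based) of the sorted version is at most `a + i` (i.e. `a + i - 1` 1-based). -/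
def IsAPF (a : ℕ) {n : ℕ} (p : Fin n → ℕ) : Prop :=
  (∀ i, 1 ≤ p i) ∧ ∀ i : Fin n, (sortPF p).getD i 0 ≤ a + (i : ℕ)

/-- `p` is an ordinary parking function of length `n`. -/
def IsPF {n : ℕ} (p : Fin n → ℕ) : Prop :=
  (∀ i, 1 ≤ p i ∧ p i ≤ n) ∧ ∀ i : Fin n, (sortPF p).getD i 0 ≤ (i : ℕ) + 1

instance (a n : ℕ) : DecidablePred (fun p : Fin n → ℕ => IsAPF a p) :=
  fun p => decidable_of_iff
    ((∀ i, 1 ≤ p i) ∧ ∀ i : Fin n, (sortPF p).getD i 0 ≤ a + (i : ℕ)) Iff.rfl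

/-- The (finite) set of all `a`-parking functions of length `n`. -/
def pfFinset (a n : ℕ) : Finset (Fin n → ℕ) :=
  (Fintype.piFinset fun _ => Finset.Icc 1 (a + n)).filter (fun p => IsAPF a p)

/-- The generating polynomial of `a`-parking functions of length `n` by sum. -/
noncomputable def Ppoly (a n : ℕ) : Polynomial ℚ :=
  ∑ p ∈ pfFinset a n, Polynomial.X ^ (∑ i, p i)

/-- `D(n,a) := P'(n,a)(1)`. -/
noncomputable def Dfun (a n : ℕ) : ℚ :=
  (Polynomial.derivative (Ppoly a n)).eval 1

open Finset Polynomial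

/-! ### basic sortPF lemmas -/

lemma sortPF_coe {n : ℕ} (p : Fin n → ℕ) : (↑(sortPF p) : Multiset ℕ) = ↑(List.ofFn p) :=
  Multiset.sort_eq _ _

lemma sortPF_sorted {n : ℕ} (p : Fin n → ℕ) : (sortPF p).Pairwise (· ≤ ·) :=
  Multiset.pairwise_sort _ _

lemma sortPF_length {n : ℕ} (p : Fin n → ℕ) : (sortPF p).length = n := by
  have := congrArg Multiset.card (sortPF_coe p)
  simpa using this

lemma sortPF_eq {n : ℕ} (p : Fin n → ℕ) (l : List ℕ) (hs : l.Pairwise (· ≤ ·))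
    (hm : (↑l : Multiset ℕ) = ↑(List.ofFn p)) : sortPF p = l :=
  List.Perm.eq_of_pairwise' (sortPF_sorted p) hs (Multiset.coe_eq_coe.mp (by rw [sortPF_coe, hm]))

lemma ofFn_coe_multiset {n : ℕ} (p : Fin n → ℕ) :
    (↑(List.ofFn p) : Multiset ℕ) = Multiset.map p Finset.univ.val := by
  rw [List.ofFn_eq_map]; rfl

lemma mem_ofFn_multiset {n : ℕ} (p : Fin n → ℕ) (x : ℕ)
    (hx : x ∈ (↑(List.ofFn p) : Multiset ℕ)) : ∃ i, p i = x := by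
  rw [ofFn_coe_multiset] at hx
  obtain ⟨i, -, h⟩ := Multiset.mem_map.mp hx
  exact ⟨i, h⟩

/-! ### the complement enumeration -/

lemma compl_card {n : ℕ} (K : Finset (Fin n)) : Kᶜ.card = n - K.card := by
  rw [Finset.card_compl, Fintype.card_fin]

noncomputable def cIso {n : ℕ} (K : Finset (Fin n)) : Fin (n - K.card) ≃o {x // x ∈ Kᶜ} :=
  Kᶜ.orderIsoOfFin (compl_card K)

lemma cIso_mem {n : ℕ} (K : Finset (Fin n)) (j : Fin (n - K.card)) :
    (cIso K j : Fin n) ∈ Kᶜ := (cIso K j).2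

lemma cIso_not_mem {n : ℕ} (K : Finset (Fin n)) (j : Fin (n - K.card)) :
    (cIso K j : Fin n) ∉ K := Finset.mem_compl.mp (cIso_mem K j)

noncomputable def cEmb {n : ℕ} (K : Finset (Fin n)) : Fin (n - K.card) ↪ Fin n :=
  ⟨fun j => (cIso K j : Fin n), fun j j' h => by
    have := (cIso K).injective (Subtype.ext h); exact this⟩

lemma compl_eq_map {n : ℕ} (K : Finset (Fin n)) :
    Kᶜ = Finset.map (cEmb K) Finset.univ := by
  ext i
  simp only [Finset.mem_map, Finset.mem_univ, true_and]
  constructor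
  · intro hi
    exact ⟨(cIso K).symm ⟨i, hi⟩, by show ((cIso K ((cIso K).symm ⟨i, hi⟩) : Fin n)) = i; simp⟩
  · rintro ⟨j, rfl⟩
    exact cIso_mem K j

/-! ### forward and backward maps -/

noncomputable def fwdK {n : ℕ} (K : Finset (Fin n)) (q : Fin (n - K.card) → ℕ) : Fin n → ℕ :=
  fun i => if h : i ∈ K then 1 else q ((cIso K).symm ⟨i, Finset.mem_compl.mpr h⟩) + 1

noncomputable def bwdK {n : ℕ} (K : Finset (Fin n)) (p : Fin n → ℕ) : Fin (n - K.card) → ℕ :=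
  fun j => p (cIso K j) - 1

lemma fwdK_mem_K {n : ℕ} (K : Finset (Fin n)) (q : Fin (n - K.card) → ℕ)
    {i : Fin n} (hi : i ∈ K) : fwdK K q i = 1 := by simp [fwdK, hi]

lemma fwdK_cIso {n : ℕ} (K : Finset (Fin n)) (q : Fin (n - K.card) → ℕ)
    (j : Fin (n - K.card)) : fwdK K q (cIso K j) = q j + 1 := by
  have h := cIso_not_mem K j
  simp only [fwdK, dif_neg h]
  congr 1
  have : (⟨(cIso K j : Fin n), Finset.mem_compl.mpr h⟩ : {x // x ∈ Kᶜ}) = cIso K j :=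
    Subtype.ext rfl
  rw [this, OrderIso.symm_apply_apply]

/-! ### structural lemmas -/

section Structure

variable {n : ℕ} (K : Finset (Fin n)) (p : Fin n → ℕ) (q : Fin (n - K.card) → ℕ)

lemma card_le {n : ℕ} (K : Finset (Fin n)) : K.card ≤ n := by
  simpa using Finset.card_le_card (Finset.subset_univ K)

lemma multiset_decomp (hK : ∀ i ∈ K, p i = 1) (hq : ∀ j, p (cIso K j) = q j + 1) :
    (↑(List.ofFn p) : Multiset ℕ) =
      Multiset.replicate K.card 1 + Multiset.map (· + 1) ↑(List.ofFn q) := by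
  have huniv : (Finset.univ : Finset (Fin n)).val = K.val + Kᶜ.val := by
    have h1 : K.disjUnion Kᶜ disjoint_compl_right = Finset.univ := by ext i; simp
    rw [← h1]; rfl
  rw [ofFn_coe_multiset, huniv, Multiset.map_add]
  congr 1
  · rw [Multiset.eq_replicate]
    constructor
    · simp
    · intro b hb
      obtain ⟨i, hi, rfl⟩ := Multiset.mem_map.mp hb
      exact hK i hi
  · rw [compl_eq_map, Finset.map_val, Multiset.map_map, ofFn_coe_multiset,
      Multiset.map_map]
    apply Multiset.map_congr rfl
    intro j _
    simp only [Function.comp_apply, cEmb, Function.Embedding.coeFn_mk]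
    exact hq j

lemma sortPF_decomp (hK : ∀ i ∈ K, p i = 1) (hq : ∀ j, p (cIso K j) = q j + 1) :
    sortPF p = List.replicate K.card 1 ++ List.map (· + 1) (sortPF q) := by
  apply sortPF_eq
  · rw [List.pairwise_append]
    refine ⟨List.pairwise_replicate.mpr (Or.inr le_rfl), ?_, ?_⟩
    · exact List.Pairwise.map _ (fun x y h => by omega) (sortPF_sorted q)
    · intro x hx y hy
      rw [List.eq_of_mem_replicate hx]
      obtain ⟨z, -, rfl⟩ := List.mem_map.mp hy
      omega
  · rw [multiset_decomp K p q hK hq, ← sortPF_coe q]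
    simp only [← Multiset.coe_add, ← Multiset.coe_replicate]
    rfl

lemma exists_cIso_index {n : ℕ} (K : Finset (Fin n)) {i : Fin n} (hi : i ∉ K) :
    ∃ j, (cIso K j : Fin n) = i :=
  ⟨(cIso K).symm ⟨i, Finset.mem_compl.mpr hi⟩, by simp⟩

lemma sum_decomp (hK : ∀ i ∈ K, p i = 1) (hq : ∀ j, p (cIso K j) = q j + 1) :
    ∑ i, p i = n + ∑ j, q j := by
  rw [← Finset.sum_add_sum_compl K p]
  have h1 : ∑ i ∈ K, p i = K.card := by
    rw [Finset.sum_congr rfl hK, Finset.sum_const, smul_eq_mul, mul_one]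
  have h2 : ∑ i ∈ Kᶜ, p i = (∑ j, q j) + (n - K.card) := by
    rw [compl_eq_map, Finset.sum_map]
    have : ∀ j : Fin (n - K.card), p (cEmb K j) = q j + 1 := fun j => hq j
    rw [Finset.sum_congr rfl (fun j _ => this j), Finset.sum_add_distrib,
      Finset.sum_const, smul_eq_mul, mul_one, Finset.card_univ, Fintype.card_fin]
  have := card_le K
  omega

lemma getD_decomp_lt {k : ℕ} (sq : List ℕ) {i : ℕ} (hi : i < k) :
    (List.replicate k 1 ++ List.map (· + 1) sq).getD i 0 = 1 := by
  rw [List.getD_append _ _ _ _ (by simpa using hi)]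
  rw [List.getD_eq_getElem _ _ (by simpa using hi)]
  simp

lemma getD_decomp_ge {k : ℕ} (sq : List ℕ) {i : ℕ} (hik : k ≤ i) (hi : i - k < sq.length) :
    (List.replicate k 1 ++ List.map (· + 1) sq).getD i 0 = sq.getD (i - k) 0 + 1 := by
  rw [List.getD_append_right _ _ _ _ (by simpa using hik)]
  simp only [List.length_replicate]
  rw [List.getD_eq_getElem _ _ (by simpa using hi), List.getElem_map,
    List.getD_eq_getElem _ _ hi]

lemma isAPF_decomp {a : ℕ} (ha : 1 ≤ a) (hK : ∀ i ∈ K, p i = 1)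
    (hq : ∀ j, p (cIso K j) = q j + 1) (hq1 : ∀ j, 1 ≤ q j) :
    IsAPF a p ↔ IsAPF (a + K.card - 1) q := by
  have hkn := card_le K
  have hlen : (sortPF q).length = n - K.card := sortPF_length q
  have hsp := sortPF_decomp K p q hK hq
  constructor
  · rintro ⟨-, hcond⟩
    refine ⟨hq1, fun j => ?_⟩
    have hj : (j : ℕ) < n - K.card := j.2
    have hi : K.card + (j : ℕ) < n := by omega
    have h5 : (sortPF p).getD (K.card + (j : ℕ)) 0 ≤ a + (K.card + (j : ℕ)) :=
      hcond ⟨K.card + j, hi⟩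
    rw [hsp, getD_decomp_ge (sortPF q) (by omega) (by omega)] at h5
    have heq : K.card + (j : ℕ) - K.card = (j : ℕ) := by omega
    rw [heq] at h5
    omega
  · rintro ⟨-, hcond⟩
    constructor
    · intro i
      by_cases hi : i ∈ K
      · rw [hK i hi]
      · obtain ⟨j, rfl⟩ := exists_cIso_index K hi
        rw [hq j]; omega
    · intro i
      rw [hsp]
      by_cases hik : (i : ℕ) < K.card
      · rw [getD_decomp_lt _ hik]; omega
      · have hjlt : (i : ℕ) - K.card < n - K.card := by have := i.2; omega
        rw [getD_decomp_ge (sortPF q) (by omega) (by omega)]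
        have h5 : (sortPF q).getD ((i : ℕ) - K.card) 0 ≤ a + K.card - 1 + ((i : ℕ) - K.card) :=
          hcond ⟨(i : ℕ) - K.card, hjlt⟩
        omega

end Structure

/-! ### membership in pfFinset -/

lemma isAPF_le {a n : ℕ} {p : Fin n → ℕ} (h : IsAPF a p) (i : Fin n) : p i ≤ a + n := by
  have hmem : p i ∈ List.ofFn p := by
    rw [List.mem_ofFn]; exact ⟨i, rfl⟩
  have : p i ∈ (↑(sortPF p) : Multiset ℕ) := by rw [sortPF_coe]; exact hmem
  obtain ⟨t, ht, hget⟩ := List.mem_iff_getElem.mp this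
  have hlen : t < n := by rwa [sortPF_length] at ht
  have h2 := h.2 ⟨t, hlen⟩
  rw [List.getD_eq_getElem _ _ ht] at h2
  simp only at h2
  omega

lemma mem_pfFinset {a n : ℕ} {p : Fin n → ℕ} : p ∈ pfFinset a n ↔ IsAPF a p := by
  simp only [pfFinset, Finset.mem_filter, Fintype.mem_piFinset, Finset.mem_Icc]
  constructor
  · exact fun h => h.2
  · intro h
    exact ⟨fun i => ⟨h.1 i, isAPF_le h i⟩, h⟩

/-! ### the fiber sum -/

lemma sum_fiber (a n : ℕ) (ha : 1 ≤ a) (K : Finset (Fin n)) :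
    ∑ p ∈ (pfFinset a n).filter
        (fun p => Finset.univ.filter (fun i => p i = 1) = K), (Polynomial.X : ℚ[X]) ^ (∑ i, p i)
      = Polynomial.X ^ n * Ppoly (a + K.card - 1) (n - K.card) := by
  rw [Ppoly, Finset.mul_sum]
  refine Finset.sum_nbij' (i := bwdK K) (j := fwdK K) ?_ ?_ ?_ ?_ ?_
  · -- maps to
    intro p hp
    rw [Finset.mem_filter] at hp
    obtain ⟨hp1, hp2⟩ := hp
    rw [mem_pfFinset] at hp1
    have hK : ∀ i ∈ K, p i = 1 := by
      intro i hi; rw [← hp2] at hi; exact (Finset.mem_filter.mp hi).2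
    have hge2 : ∀ j, 2 ≤ p (cIso K j) := by
      intro j
      have h1 : p (cIso K j) ≠ 1 := by
        intro hcon
        apply cIso_not_mem K j
        have hmem : (cIso K j : Fin n) ∈ Finset.univ.filter (fun i => p i = 1) := by
          simp [hcon]
        rwa [hp2] at hmem
      have := hp1.1 (cIso K j)
      omega
    have hq : ∀ j, p (cIso K j) = bwdK K p j + 1 := by
      intro j; have := hge2 j; simp only [bwdK]; omega
    have hq1 : ∀ j, 1 ≤ bwdK K p j := by
      intro j; have := hge2 j; simp only [bwdK]; omega
    rw [mem_pfFinset]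
    exact (isAPF_decomp K p (bwdK K p) ha hK hq hq1).mp hp1
  · -- maps back
    intro q hq
    rw [mem_pfFinset] at hq
    have hq1 : ∀ j, 1 ≤ q j := hq.1
    have hK : ∀ i ∈ K, fwdK K q i = 1 := fun i hi => fwdK_mem_K K q hi
    have hqq : ∀ j, fwdK K q (cIso K j) = q j + 1 := fwdK_cIso K q
    rw [Finset.mem_filter, mem_pfFinset]
    constructor
    · exact (isAPF_decomp K (fwdK K q) q ha hK hqq hq1).mpr hq
    · ext i
      simp only [Finset.mem_filter, Finset.mem_univ, true_and]
      constructor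
      · intro h1
        by_contra hi
        obtain ⟨j, rfl⟩ := exists_cIso_index K hi
        rw [hqq j] at h1
        have := hq1 j; omega
      · intro hi; exact hK i hi
  · -- left inverse
    intro p hp
    rw [Finset.mem_filter] at hp
    obtain ⟨hp1, hp2⟩ := hp
    rw [mem_pfFinset] at hp1
    funext i
    by_cases hi : i ∈ K
    · rw [fwdK_mem_K K _ hi]
      rw [← hp2] at hi
      exact ((Finset.mem_filter.mp hi).2).symm
    · obtain ⟨j, rfl⟩ := exists_cIso_index K hi
      rw [fwdK_cIso]
      have h1 : p (cIso K j) ≠ 1 := by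
        intro hcon
        apply cIso_not_mem K j
        have hmem : (cIso K j : Fin n) ∈ Finset.univ.filter (fun i => p i = 1) := by
          simp [hcon]
        rwa [hp2] at hmem
      have := hp1.1 (cIso K j)
      simp only [bwdK]
      omega
  · -- right inverse
    intro q hq
    funext j
    simp only [bwdK, fwdK_cIso]
    omega
  · -- values
    intro p hp
    rw [Finset.mem_filter] at hp
    obtain ⟨hp1, hp2⟩ := hp
    rw [mem_pfFinset] at hp1
    have hK : ∀ i ∈ K, p i = 1 := by
      intro i hi; rw [← hp2] at hi; exact (Finset.mem_filter.mp hi).2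
    have hge2 : ∀ j, 2 ≤ p (cIso K j) := by
      intro j
      have h1 : p (cIso K j) ≠ 1 := by
        intro hcon
        apply cIso_not_mem K j
        have hmem : (cIso K j : Fin n) ∈ Finset.univ.filter (fun i => p i = 1) := by
          simp [hcon]
        rwa [hp2] at hmem
      have := hp1.1 (cIso K j)
      omega
    have hq : ∀ j, p (cIso K j) = bwdK K p j + 1 := by
      intro j; have := hge2 j; simp only [bwdK]; omega
    rw [sum_decomp K p (bwdK K p) hK hq, pow_add]

/-! ### the polynomial recurrence -/

lemma Ppoly_rec (a n : ℕ) (ha : 1 ≤ a) :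
    Ppoly a n = ∑ k ∈ Finset.range (n + 1),
      (n.choose k) • (Polynomial.X ^ n * Ppoly (a + k - 1) (n - k)) := by
  classical
  rw [Ppoly]
  rw [← Finset.sum_fiberwise_of_maps_to
    (g := fun p : Fin n → ℕ => Finset.univ.filter (fun i => p i = 1))
    (t := Finset.univ) (fun p _ => Finset.mem_univ _)]
  have h1 : ∀ K ∈ (Finset.univ : Finset (Finset (Fin n))),
      (∑ p ∈ (pfFinset a n).filter
        (fun p => Finset.univ.filter (fun i => p i = 1) = K), (Polynomial.X : ℚ[X]) ^ (∑ i, p i))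
      = Polynomial.X ^ n * Ppoly (a + K.card - 1) (n - K.card) :=
    fun K _ => sum_fiber a n ha K
  rw [Finset.sum_congr rfl h1]
  rw [← Finset.powerset_univ, Finset.sum_powerset]
  rw [Finset.card_univ, Fintype.card_fin]
  refine Finset.sum_congr rfl fun k hk => ?_
  have h2 : ∀ K ∈ Finset.powersetCard k (Finset.univ : Finset (Fin n)),
      (Polynomial.X : ℚ[X]) ^ n * Ppoly (a + K.card - 1) (n - K.card)
        = Polynomial.X ^ n * Ppoly (a + k - 1) (n - k) := by
    intro K hK
    rw [(Finset.mem_powersetCard.mp hK).2]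
  rw [Finset.sum_congr rfl h2, Finset.sum_const, Finset.card_powersetCard,
    Finset.card_univ, Fintype.card_fin]

/-! ### base cases -/

lemma pfFinset_zero (a : ℕ) : pfFinset a 0 = {fun i => i.elim0} := by
  apply Finset.eq_singleton_iff_unique_mem.mpr
  constructor
  · rw [mem_pfFinset]
    exact ⟨fun i => i.elim0, fun i => i.elim0⟩
  · intro p _
    funext i
    exact i.elim0

lemma Ppoly_zero (a : ℕ) : Ppoly a 0 = 1 := by
  rw [Ppoly, pfFinset_zero, Finset.sum_singleton]
  simp

lemma pfFinset_a_zero (n : ℕ) (hn : 1 ≤ n) : pfFinset 0 n = ∅ := by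
  rw [Finset.eq_empty_iff_forall_notMem]
  intro p hp
  rw [mem_pfFinset] at hp
  have h0 : 0 < (sortPF p).length := by rw [sortPF_length]; omega
  have hg := hp.2 ⟨0, hn⟩
  rw [List.getD_eq_getElem _ _ h0] at hg
  simp only at hg
  have hmem : (sortPF p)[0] ∈ (↑(sortPF p) : Multiset ℕ) := by
    exact_mod_cast List.getElem_mem h0
  obtain ⟨i, hi⟩ := mem_ofFn_multiset p _ (by rw [← sortPF_coe]; exact hmem)
  have := hp.1 i
  omega

lemma Ppoly_a_zero (n : ℕ) (hn : 1 ≤ n) : Ppoly 0 n = 0 := by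
  rw [Ppoly, pfFinset_a_zero n hn, Finset.sum_empty]

/-! ### evaluation at 1 -/

lemma Ppoly_eval_one_rec (a n : ℕ) (ha : 1 ≤ a) :
    (Ppoly a n).eval 1 = ∑ k ∈ Finset.range (n + 1),
      (n.choose k : ℚ) * (Ppoly (a + k - 1) (n - k)).eval 1 := by
  rw [Ppoly_rec a n ha]
  rw [Polynomial.eval_finset_sum]
  refine Finset.sum_congr rfl fun k _ => ?_
  rw [Polynomial.eval_smul, Polynomial.eval_mul, Polynomial.eval_pow, Polynomial.eval_X,
    one_pow, one_mul, nsmul_eq_mul]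

/-! ### algebraic identities -/

lemma binom_sum (q : ℚ) (m : ℕ) :
    (q + 1) ^ m = ∑ k ∈ Finset.range (m + 1), (m.choose k : ℚ) * q ^ (m - k) := by
  rw [add_comm q 1, add_pow]
  exact Finset.sum_congr rfl fun k _ => by ring

lemma key_sum1 (q : ℚ) (n : ℕ) (hn : 1 ≤ n) :
    ∑ k ∈ Finset.Ico 1 n, (n.choose k : ℚ) * q ^ (n - k) = (q + 1) ^ n - q ^ n - 1 := by
  have h := binom_sum q n
  rw [Finset.range_eq_Ico, Finset.sum_eq_sum_Ico_succ_bot (by omega : 0 < n + 1),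
    Finset.sum_Ico_succ_top (by omega : 1 ≤ n)] at h
  simp only [Nat.choose_zero_right, Nat.choose_self, Nat.cast_one, Nat.sub_zero,
    Nat.sub_self, pow_zero, one_mul, mul_one] at h
  linarith

lemma key_sum2 (q : ℚ) (n : ℕ) (hn : 1 ≤ n) :
    ∑ k ∈ Finset.Ico 1 n, (k : ℚ) * (n.choose k : ℚ) * q ^ (n - k)
      = (n : ℚ) * ((q + 1) ^ (n - 1) - 1) := by
  have hstep : ∀ k ∈ Finset.Ico 1 n,
      (k : ℚ) * (n.choose k : ℚ) * q ^ (n - k)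
        = (n : ℚ) * ((n-1).choose (k-1) : ℚ) * q ^ (n - k) := by
    intro k hk
    rw [Finset.mem_Ico] at hk
    have hnat : k * n.choose k = n * (n-1).choose (k-1) := by
      have h := Nat.add_one_mul_choose_eq (n-1) (k-1)
      have h1 : n - 1 + 1 = n := by omega
      have h2 : k - 1 + 1 = k := by omega
      simp only [Nat.succ_eq_add_one, h1, h2] at h
      rw [h]
      exact Nat.mul_comm _ _
    calc (k : ℚ) * (n.choose k : ℚ) * q ^ (n - k)
        = ((k * n.choose k : ℕ) : ℚ) * q ^ (n - k) := by push_cast; ring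
      _ = ((n * (n-1).choose (k-1) : ℕ) : ℚ) * q ^ (n - k) := by rw [hnat]
      _ = (n : ℚ) * ((n-1).choose (k-1) : ℚ) * q ^ (n - k) := by push_cast; ring
  rw [Finset.sum_congr rfl hstep, Finset.sum_Ico_eq_sum_range]
  have hterm : ∀ i ∈ Finset.range (n - 1),
      (n : ℚ) * ((n-1).choose (1 + i - 1) : ℚ) * q ^ (n - (1 + i))
        = (n : ℚ) * (((n-1).choose i : ℚ) * q ^ ((n-1) - i)) := by
    intro i _
    have h1 : 1 + i - 1 = i := by omega
    have h2 : n - (1 + i) = (n - 1) - i := by omega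
    rw [h1, h2, mul_assoc]
  rw [Finset.sum_congr rfl hterm, ← Finset.mul_sum]
  congr 1
  have h := binom_sum q (n - 1)
  rw [Finset.sum_range_succ] at h
  simp only [Nat.choose_self, Nat.cast_one, Nat.sub_self, pow_zero, one_mul, mul_one] at h
  linarith

lemma key_alg (n a : ℕ) (hn : 1 ≤ n) :
    ((a : ℚ) + 1) * (((a : ℚ) + 1) + (n : ℚ)) ^ (n - 1) =
      (a : ℚ) * ((a : ℚ) + (n : ℚ)) ^ (n - 1) +
      (∑ k ∈ Finset.Ico 1 n, (n.choose k : ℚ) * ((a : ℚ) + (k : ℚ))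
          * ((a : ℚ) + (n : ℚ)) ^ (n - 1 - k)) + 1 := by
  set q : ℚ := (a : ℚ) + (n : ℚ) with hqdef
  have hn1 : (1 : ℚ) ≤ (n : ℚ) := by exact_mod_cast hn
  have ha0 : (0 : ℚ) ≤ (a : ℚ) := Nat.cast_nonneg a
  have hq0 : q ≠ 0 := by rw [hqdef]; intro h; linarith
  apply mul_left_cancel₀ hq0
  have hsum : q * (∑ k ∈ Finset.Ico 1 n, (n.choose k : ℚ) * ((a : ℚ) + (k : ℚ)) * q ^ (n - 1 - k))
      = (a : ℚ) * ((q + 1) ^ n - q ^ n - 1) + (n : ℚ) * ((q + 1) ^ (n - 1) - 1) := by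
    rw [Finset.mul_sum]
    have hterm : ∀ k ∈ Finset.Ico 1 n,
        q * ((n.choose k : ℚ) * ((a : ℚ) + (k : ℚ)) * q ^ (n - 1 - k))
          = (a:ℚ) * ((n.choose k : ℚ) * q ^ (n - k))
            + (k : ℚ) * (n.choose k : ℚ) * q ^ (n - k) := by
      intro k hk
      rw [Finset.mem_Ico] at hk
      have h2 : n - k = (n - 1 - k) + 1 := by omega
      rw [h2, pow_succ]
      ring
    rw [Finset.sum_congr rfl hterm, Finset.sum_add_distrib, ← Finset.mul_sum,
      key_sum1 q n hn, key_sum2 q n hn]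
  have e1 : (q + 1) ^ n = (q + 1) ^ (n - 1) * (q + 1) := by
    rw [← pow_succ]; congr 1; omega
  have e2 : q ^ n = q ^ (n - 1) * q := by
    rw [← pow_succ]; congr 1; omega
  have e3 : ((a : ℚ) + 1) + (n : ℚ) = q + 1 := by rw [hqdef]; ring
  rw [mul_add, mul_add, hsum, e3, hqdef]
  rw [e1, e2] at *
  ring

lemma eval_one_formula : ∀ n : ℕ, 1 ≤ n → ∀ a : ℕ,
    (Ppoly a n).eval 1 = (a : ℚ) * ((a : ℚ) + (n : ℚ)) ^ (n - 1) := by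
  intro n
  induction n using Nat.strong_induction_on with
  | _ n ih =>
    intro hn a
    induction a with
    | zero =>
      rw [Ppoly_a_zero n hn]
      simp
    | succ a iha =>
      rw [Ppoly_eval_one_rec (a + 1) n (by omega)]
      rw [Finset.range_eq_Ico, Finset.sum_eq_sum_Ico_succ_bot (by omega : 0 < n + 1),
        Finset.sum_Ico_succ_top (by omega : 1 ≤ n)]
      have hbot : (n.choose 0 : ℚ) * (Ppoly (a + 1 + 0 - 1) (n - 0)).eval 1
          = (a : ℚ) * ((a : ℚ) + (n : ℚ)) ^ (n - 1) := by
        have h1 : a + 1 + 0 - 1 = a := by omega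
        have h2 : n - 0 = n := by omega
        rw [h1, h2, Nat.choose_zero_right, Nat.cast_one, one_mul, iha]
      have htop : (n.choose n : ℚ) * (Ppoly (a + 1 + n - 1) (n - n)).eval 1 = 1 := by
        have h2 : n - n = 0 := by omega
        rw [h2, Ppoly_zero, Nat.choose_self, Nat.cast_one, one_mul, Polynomial.eval_one]
      have hmid : ∀ k ∈ Finset.Ico 1 n,
          (n.choose k : ℚ) * (Ppoly (a + 1 + k - 1) (n - k)).eval 1
            = (n.choose k : ℚ) * (((a : ℚ) + 1) + (k : ℚ) - 1)
                * (((a : ℚ) + 1) + (n : ℚ) - 1) ^ (n - 1 - k) := by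
        intro k hk
        rw [Finset.mem_Ico] at hk
        have h1 : a + 1 + k - 1 = a + k := by omega
        have hlt : n - k < n := by omega
        have hge : 1 ≤ n - k := by omega
        rw [h1, ih (n - k) hlt hge (a + k)]
        have hc1 : ((a + k : ℕ) : ℚ) = (a : ℚ) + (k : ℚ) := by push_cast; ring
        have hc5 : ((n - k : ℕ) : ℚ) = (n : ℚ) - (k : ℚ) := Nat.cast_sub (by omega)
        have hc3 : (n - k) - 1 = n - 1 - k := by omega
        rw [hc1, hc5, hc3]
        ring
      rw [hbot, htop, Finset.sum_congr rfl hmid]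
      have hfin := key_alg n a hn
      push_cast
      have hc4 : ∀ k ∈ Finset.Ico 1 n,
          (n.choose k : ℚ) * (((a : ℚ) + 1) + (k : ℚ) - 1)
              * (((a : ℚ) + 1) + (n : ℚ) - 1) ^ (n - 1 - k)
            = (n.choose k : ℚ) * ((a : ℚ) + (k : ℚ)) * ((a : ℚ) + (n : ℚ)) ^ (n - 1 - k) := by
        intro k _
        ring_nf
      rw [Finset.sum_congr rfl hc4]
      linarith [hfin]

/-! ### final assembly -/

lemma Dfun_zero_n (a : ℕ) : Dfun a 0 = 0 := by
  rw [Dfun, Ppoly_zero]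
  simp

lemma Dfun_zero_a (n : ℕ) : Dfun 0 n = 0 := by
  rcases Nat.eq_zero_or_pos n with h | h
  · rw [h]; exact Dfun_zero_n 0
  · rw [Dfun, Ppoly_a_zero n h]
    simp

theorem Dfun_recurrence' :
    (∀ a n : ℕ, 1 ≤ a →
        Dfun a n - (∑ k ∈ Finset.range (n + 1),
            (n.choose k : ℚ) * Dfun (a + k - 1) (n - k)) =
          (n : ℚ) * ((a : ℚ) * ((a : ℚ) + (n : ℚ)) ^ (n - 1))) ∧
    (∀ a : ℕ, Dfun a 0 = 0) ∧
    (∀ n : ℕ, Dfun 0 n = 0) := by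
  refine ⟨?_, Dfun_zero_n, Dfun_zero_a⟩
  intro a n ha
  rcases Nat.eq_zero_or_pos n with hn | hn
  · subst hn
    rw [Finset.range_one, Finset.sum_singleton, Dfun_zero_n, Dfun_zero_n]
    simp
  · have hD : Dfun a n = ∑ k ∈ Finset.range (n + 1),
        (n.choose k : ℚ) * ((n : ℚ) * (Ppoly (a + k - 1) (n - k)).eval 1
          + Dfun (a + k - 1) (n - k)) := by
      rw [Dfun, Ppoly_rec a n ha]
      rw [map_sum]
      rw [Polynomial.eval_finset_sum]
      refine Finset.sum_congr rfl fun k _ => ?_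
      rw [Polynomial.derivative_smul, Polynomial.eval_smul, nsmul_eq_mul]
      congr 1
      rw [Polynomial.derivative_mul, Polynomial.derivative_X_pow, Polynomial.eval_add,
        Polynomial.eval_mul, Polynomial.eval_mul, Polynomial.eval_mul, Polynomial.eval_C,
        Polynomial.eval_pow, Polynomial.eval_pow, Polynomial.eval_X, one_pow, one_pow]
      rw [Dfun]
      ring
    rw [hD, ← Finset.sum_sub_distrib]
    have hsimp : ∀ k ∈ Finset.range (n + 1),
        (n.choose k : ℚ) * ((n : ℚ) * (Ppoly (a + k - 1) (n - k)).eval 1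
            + Dfun (a + k - 1) (n - k))
          - (n.choose k : ℚ) * Dfun (a + k - 1) (n - k)
        = (n : ℚ) * ((n.choose k : ℚ) * (Ppoly (a + k - 1) (n - k)).eval 1) := by
      intro k _
      ring
    rw [Finset.sum_congr rfl hsimp, ← Finset.mul_sum, ← Ppoly_eval_one_rec a n ha,
      eval_one_formula n hn a]


/-- `D(n,a) - Σ_{k=0}^n C(n,k) D(n-k,a+k-1) = n · a(a+n)^(n-1)` for `a ≥ 1`, with
`D(0,a) = 0` and `D(n,0) = 0`. -/
theorem Dfun_recurrence :
    (∀ a n : ℕ, 1 ≤ a →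
        Dfun a n - (∑ k ∈ Finset.range (n + 1),
            (n.choose k : ℚ) * Dfun (a + k - 1) (n - k)) =
          (n : ℚ) * ((a : ℚ) * ((a : ℚ) + (n : ℚ)) ^ (n - 1))) ∧
    (∀ a : ℕ, Dfun a 0 = 0) ∧
    (∀ n : ℕ, Dfun 0 n = 0) := Dfun_recurrence'
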